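/- arXiv:1307.2457 — 3 statements merged into one kernel-verified Lean document; each statement's English description precedes it below -/
import Mathlib

section
/- If u and v are vectors in ℝ³ with ‖u‖ = ‖v‖ and R is any rotation of ℝ³ with R(v) = u, then the rotation angle of R is at least the angle between u and v. That is, the rotation taking v to u within the plane spanned by u and v has the smallest possible rotation angle among all rotations mapping v to u. -/
open InnerProductGeometry

open Matrix

private lemma ch3 (A : Matrix (Fin 3) (Fin 3) ℝ) :
    (2:ℝ) • A.adjugate = (2:ℝ) • (A * A) - (2 * A.trace) • A
      + ((A.trace)^2 - (A*A).trace) • (1 : Matrix (Fin 3) (Fin 3) ℝ) := by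
  ext i j
  fin_cases i <;> fin_cases j <;>
    simp [Matrix.adjugate_fin_three, Matrix.trace_fin_three, Matrix.mul_apply,
      Fin.sum_univ_three, Matrix.one_apply, Matrix.smul_apply, Matrix.sub_apply,
      Matrix.add_apply, smul_eq_mul] <;> ring


/-- If u, v ∈ ℝ³ are nonzero with ‖u‖ = ‖v‖ and R ∈ SO(3) maps v to u, then
the rotation angle θ ∈ [0,π] of R (characterized by trace R = 1 + 2 cos θ)
is at least the angle between u and v. -/
theorem stmt_1 (R : Matrix (Fin 3) (Fin 3) ℝ)
    (hR : R ∈ Matrix.orthogonalGroup (Fin 3) ℝ) (hdet : R.det = 1)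
    (u v : EuclideanSpace ℝ (Fin 3)) (hu0 : u ≠ 0) (hv0 : v ≠ 0)
    (hnorm : ‖u‖ = ‖v‖)
    (huv : ∀ i, u i = ∑ j, R i j * v j)
    (θ : ℝ) (hθ : θ ∈ Set.Icc 0 Real.pi)
    (htrace : R.trace = 1 + 2 * Real.cos θ) :
    angle u v ≤ θ := by
  set c : ℝ := Real.cos θ with hc
  -- orthogonality facts
  rw [Matrix.mem_orthogonalGroup_iff] at hR
  have hst : star R = Rᵀ := by
    rw [Matrix.star_eq_conjTranspose, Matrix.conjTranspose_eq_transpose_of_trivial]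
  have hR : R * Rᵀ = 1 := hR   -- R * Rᵀ = 1
  have hR' : Rᵀ * R = 1 := mul_eq_one_comm.mp hR
  -- adjugate = transpose
  have hadj : R.adjugate = Rᵀ := by
    have h1 : R * R.adjugate = 1 := by rw [Matrix.mul_adjugate, hdet, one_smul]
    calc R.adjugate = 1 * R.adjugate := (Matrix.one_mul _).symm
      _ = Rᵀ * (R * R.adjugate) := by rw [← hR', Matrix.mul_assoc]
      _ = Rᵀ := by rw [h1, Matrix.mul_one]
  set t : ℝ := R.trace with ht
  have hK := ch3 R
  rw [hadj] at hK
  -- trace of R*R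
  have htrRR : (R * R).trace = t ^ 2 - 2 * t := by
    have := congrArg Matrix.trace hK
    simp only [Matrix.trace_smul, Matrix.trace_add, Matrix.trace_sub,
      Matrix.trace_transpose, Matrix.trace_one, smul_eq_mul,
      Fintype.card_fin, Nat.cast_ofNat] at this
    have h3 : (Matrix.trace (1 : Matrix (Fin 3) (Fin 3) ℝ)) = 3 := by
      simp [Matrix.trace_fin_three, Matrix.one_apply]
    nlinarith [this]
  rw [htrRR] at hK
  -- R * R = Rᵀ + t • R - t • 1
  have hRR : R * R = Rᵀ + t • R - t • (1 : Matrix (Fin 3) (Fin 3) ℝ) := by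
    have h2 : (2:ℝ) • (R * R) = (2:ℝ) • (Rᵀ + t • R - t • (1 : Matrix (Fin 3) (Fin 3) ℝ)) := by
      rw [show (2:ℝ) • (R*R) = (2:ℝ) • Rᵀ - ((t^2 - (t^2 - 2*t)) • (1 : Matrix (Fin 3) (Fin 3) ℝ)) + (2*t) • R by
        rw [hK]; module]
      module
    exact smul_right_injective _ (two_ne_zero) h2
  have hRtRt : Rᵀ * Rᵀ = R + t • Rᵀ - t • (1 : Matrix (Fin 3) (Fin 3) ℝ) := by
    have := congrArg Matrix.transpose hRR
    simpa [Matrix.transpose_mul, Matrix.transpose_add, Matrix.transpose_sub,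
      Matrix.transpose_smul, Matrix.transpose_one] using this
  -- the key symmetric matrix
  set N : Matrix (Fin 3) (Fin 3) ℝ := R + Rᵀ - (2*c) • 1 with hN
  have htc : t = 1 + 2 * c := htrace
  have hNN : N * N = (2 - 2*c) • N := by
    rw [hN]
    simp only [sub_mul, add_mul, mul_sub, mul_add, Matrix.smul_mul,
      Matrix.mul_smul, Matrix.one_mul, Matrix.mul_one, smul_smul]
    rw [hRR, hRtRt, hR, hR', htc]
    module
  have hNsymm : Nᵀ = N := by
    rw [hN]
    simp [Matrix.transpose_add, Matrix.transpose_sub, Matrix.transpose_smul,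
      Matrix.transpose_one]
    module
  -- quadratic form
  set w : Fin 3 → ℝ := fun i => v i with hw
  set q : ℝ := dotProduct (N.mulVec w) w with hq
  have hq1 : dotProduct (N.mulVec w) (N.mulVec w) = (2 - 2*c) * q := by
    rw [Matrix.dotProduct_mulVec (N.mulVec w) N w, ← Matrix.mulVec_transpose, hNsymm,
      Matrix.mulVec_mulVec, hNN, hq]
    simp [Matrix.smul_mulVec, smul_dotProduct]
  have hqnn : 0 ≤ q := by
    rcases lt_or_eq_of_le (Real.cos_le_one θ) with h1 | h1
    · have hd : 0 < 2 - 2*c := by linarith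
      have hnn : 0 ≤ dotProduct (N.mulVec w) (N.mulVec w) :=
        Finset.sum_nonneg fun i _ => mul_self_nonneg _
      nlinarith
    · have hz : dotProduct (N.mulVec w) (N.mulVec w) = 0 := by
        have h2c : (2:ℝ) - 2*c = 0 := by rw [hc, h1]; ring
        rw [hq1, h2c, zero_mul]
      have : N.mulVec w = 0 := dotProduct_self_eq_zero.mp hz
      rw [hq, this, zero_dotProduct]
  -- compute q
  have hRvw : dotProduct (R.mulVec w) w = ∑ i, u i * v i := by
    apply Finset.sum_congr rfl
    intro i _
    rw [huv i]
    simp [Matrix.mulVec, dotProduct, hw]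
  have hRtvw : dotProduct (Rᵀ.mulVec w) w = ∑ i, u i * v i := by
    rw [Matrix.mulVec_transpose, ← Matrix.dotProduct_mulVec, dotProduct_comm, hRvw]
  have hqval : q = 2 * (∑ i, u i * v i) - 2*c * dotProduct w w := by
    rw [hq, hN]
    simp only [Matrix.sub_mulVec, Matrix.add_mulVec, Matrix.smul_mulVec,
      Matrix.one_mulVec, sub_dotProduct, add_dotProduct,
      smul_dotProduct, smul_eq_mul, hRvw, hRtvw]
    ring
  -- translate to inner products
  have hinner : (inner ℝ u v : ℝ) = ∑ i, u i * v i := by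
    simp [PiLp.inner_apply, RCLike.inner_apply, mul_comm]
  have hvnorm : dotProduct w w = ‖v‖^2 := by
    rw [← real_inner_self_eq_norm_sq]
    simp [dotProduct, PiLp.inner_apply, RCLike.inner_apply, hw]
    rw [EuclideanSpace.norm_eq, Real.sq_sqrt (by positivity)]; simp [sq, Real.norm_eq_abs, abs_mul_abs_self]
  have hvpos : 0 < ‖v‖ := norm_pos_iff.mpr hv0
  have hkey : c * (‖u‖ * ‖v‖) ≤ (inner ℝ u v : ℝ) := by
    rw [hnorm, hinner]
    rw [hvnorm] at hqval
    have h2 : ‖v‖ * ‖v‖ = ‖v‖^2 := (sq ‖v‖).symm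
    linarith [hqnn]
  -- finish with arccos
  rw [angle, ← Real.arccos_cos hθ.1 hθ.2]
  rw [Real.arccos, Real.arccos]
  have : c ≤ (inner ℝ u v : ℝ) / (‖u‖ * ‖v‖) := by
    rw [le_div_iff₀ (mul_pos (norm_pos_iff.mpr hu0) hvpos)]
    linarith [hkey]
  have := Real.monotone_arcsin this
  linarith
end

section
/- Let v ∈ L²(ℝᵐ, ℝ³) be a nonzero square-integrable vector field with ‖v‖_{L²} = 1, and let u = R_{P,α}(v) be its copy under an outer rotation by angle α ∈ [0, π) in the plane of a unit bivector P. Let e^{φQ} = (u ⋆ v)(0) be the (normalized) geometric cross correlation at the origin, written in polar form with unit bivector Q and φ ∈ [0, π]. Then the composed rotation exp(αP/2)·exp(φQ/2) has rotation angle β satisfying β ≤ α. -/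
open MeasureTheory Quaternion

noncomputable def reCLM' : ℍ[ℝ] →L[ℝ] ℝ :=
  { QuaternionAlgebra.reₗ _ _ _ with cont := Quaternion.continuous_re }

lemma re_mul_comm' (a b : ℍ[ℝ]) : (a * b).re = (b * a).re := by
  simp only [Quaternion.re_mul]; ring

lemma abs_re_le_norm' (a : ℍ[ℝ]) : |a.re| ≤ ‖a‖ := by
  have h := Quaternion.normSq_eq_norm_mul_self a
  rw [Quaternion.normSq_def'] at h
  nlinarith [norm_nonneg a, sq_nonneg a.imI, sq_nonneg a.imJ, sq_nonneg a.imK,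
    abs_nonneg a.re, sq_abs a.re]

lemma rotor_norm' (P : ℍ[ℝ]) (hP_biv : P.re = 0) (hP_unit : ‖P‖ = 1) (c s : ℝ)
    (h : c ^ 2 + s ^ 2 = 1) : ‖(c : ℍ[ℝ]) + s • P‖ = 1 := by
  have h2 := Quaternion.normSq_eq_norm_mul_self P
  rw [hP_unit, Quaternion.normSq_def'] at h2
  have h3 := Quaternion.normSq_eq_norm_mul_self ((c : ℍ[ℝ]) + s • P)
  rw [Quaternion.normSq_def'] at h3
  simp only [Quaternion.re_add, Quaternion.re_coe, Quaternion.re_smul, Quaternion.imI_add,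
    Quaternion.imI_coe, Quaternion.imI_smul, Quaternion.imJ_add, Quaternion.imJ_coe,
    Quaternion.imJ_smul, Quaternion.imK_add, Quaternion.imK_coe, Quaternion.imK_smul,
    smul_eq_mul, hP_biv] at h3
  nlinarith [norm_nonneg ((c : ℍ[ℝ]) + s • P)]

lemma integral_re_comm' {m : ℕ} (p : ℍ[ℝ]) (f : EuclideanSpace ℝ (Fin m) → ℍ[ℝ])
    (hf : Integrable f volume) :
    (∫ x, (p * f x).re) = (p * ∫ x, f x).re :=
  (reCLM'.comp ((ContinuousLinearMap.mul ℝ ℍ[ℝ]) p)).integral_comp_comm hf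

set_option maxHeartbeats 1000000 in
/-- Lemma 2 of the paper, in the quaternion model of Cl(3,0): vectors of ℝ³
are imaginary quaternions, the rotor exp(αP/2) for a unit bivector P is the
unit quaternion cos(α/2) + sin(α/2)·P, the outer rotation is
R_{P,α}(v)(x) = exp(−αP/2) v(x) exp(αP/2) = star(p) v(x) p, and the geometric
cross correlation at the origin is (u ⋆ v)(0) = ∫ reverse(u(y)) v(y) dy, where
reversion on a vector is the identity and on the scalar-plus-bivector valued
result corresponds to quaternion conjugation of the first factor.  If v is a
unit-L²-norm field, α ∈ [0,π), and the normalized correlation has polar form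
cos φ + sin φ·Q with unit imaginary quaternion Q and φ ∈ [0,π], then the
composed rotor exp(αP/2)·exp(φQ/2) has rotation angle β = 2 arccos|⟨·⟩₀| ≤ α:
applying the correlation rotor does not increase the misalignment. -/
theorem stmt_10 {m : ℕ} (v u : EuclideanSpace ℝ (Fin m) → ℍ[ℝ])
    (hv_vec : ∀ x, (v x).re = 0)
    (hv_L2 : MemLp v 2 volume)
    (hv_norm : (∫ x, ‖v x‖ ^ 2) = 1)
    (P : ℍ[ℝ]) (hP_biv : P.re = 0) (hP_unit : ‖P‖ = 1)
    (α : ℝ) (hα : α ∈ Set.Ico 0 Real.pi)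
    (hu : ∀ x, u x = star ((Real.cos (α / 2) : ℍ[ℝ]) + Real.sin (α / 2) • P) *
        v x * ((Real.cos (α / 2) : ℍ[ℝ]) + Real.sin (α / 2) • P))
    (Cor : ℍ[ℝ]) (hCor : Cor = ∫ x, star (u x) * v x)
    (φ : ℝ) (hφ : φ ∈ Set.Icc 0 Real.pi)
    (Q : ℍ[ℝ]) (hQ_biv : Q.re = 0) (hQ_unit : ‖Q‖ = 1)
    (hpolar : Cor = ‖Cor‖ • ((Real.cos φ : ℍ[ℝ]) + Real.sin φ • Q)) :
    2 * Real.arccos |((((Real.cos (α / 2) : ℍ[ℝ]) + Real.sin (α / 2) • P) *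
        ((Real.cos (φ / 2) : ℍ[ℝ]) + Real.sin (φ / 2) • Q)).re)| ≤ α := by
  obtain ⟨hα0, hαπ⟩ := hα
  obtain ⟨hφ0, hφπ⟩ := hφ
  have hπ := Real.pi_pos
  set c := Real.cos (α / 2) with hc
  set s := Real.sin (α / 2) with hs
  set c2 := Real.cos (φ / 2) with hc2
  set s2 := Real.sin (φ / 2) with hs2
  set p : ℍ[ℝ] := (c : ℍ[ℝ]) + s • P with hpdef
  set q : ℍ[ℝ] := (c2 : ℍ[ℝ]) + s2 • Q with hqdef
  have hc_pos : 0 < c := Real.cos_pos_of_mem_Ioo ⟨by linarith, by linarith⟩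
  have hcs : c ^ 2 + s ^ 2 = 1 := by
    have := Real.sin_sq_add_cos_sq (α / 2); linarith
  have hcqs : c2 ^ 2 + s2 ^ 2 = 1 := by
    have := Real.sin_sq_add_cos_sq (φ / 2); linarith
  have hp_norm : ‖p‖ = 1 := rotor_norm' P hP_biv hP_unit c s hcs
  have hq_norm : ‖q‖ = 1 := rotor_norm' Q hQ_biv hQ_unit c2 s2 hcqs
  have hpre : p.re = c := by simp [hpdef, hP_biv]
  -- measurability / integrability
  have hvm := hv_L2.aestronglyMeasurable
  have hum : AEStronglyMeasurable u volume := by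
    have : u = fun x => star p * v x * p := funext hu
    rw [this]
    exact (hvm.const_mul _).mul_const _
  have hnormu : ∀ x, ‖u x‖ = ‖v x‖ := by
    intro x
    rw [hu x, norm_mul, norm_mul, Quaternion.norm_star, hp_norm]; ring
  have hnorm_uv : ∀ x, ‖star (u x) * v x‖ = ‖v x‖ ^ 2 := by
    intro x
    rw [norm_mul, Quaternion.norm_star, hnormu x]; ring
  have hInt2 : Integrable (fun x => ‖v x‖ ^ 2) volume :=
    (memLp_two_iff_integrable_sq_norm hvm).mp hv_L2
  have hInt : Integrable (fun x => star (u x) * v x) volume := by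
    refine hInt2.mono' ((continuous_star.comp_aestronglyMeasurable hum).mul hvm) ?_
    filter_upwards with x
    exact le_of_eq (hnorm_uv x)
  have hpsp : p * star p = 1 := by
    rw [Quaternion.self_mul_star, Quaternion.normSq_eq_norm_mul_self, hp_norm]
    norm_num
  -- pointwise value of the integrand
  have hpoint : ∀ x, (p * (star (u x) * v x)).re = c * ‖v x‖ ^ 2 := by
    intro x
    have e1 : star (u x) * v x = star p * (star (v x) * (p * v x)) := by
      rw [hu x]; simp only [star_mul, star_star, mul_assoc]
    rw [e1, ← mul_assoc, hpsp, one_mul, re_mul_comm', mul_assoc,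
      Quaternion.self_mul_star, Quaternion.mul_coe_eq_smul, Quaternion.re_smul, smul_eq_mul,
      hpre, Quaternion.normSq_eq_norm_mul_self]
    ring
  -- re (p * Cor) = c
  have hre_pCor : (p * Cor).re = c := by
    rw [hCor, ← integral_re_comm' p _ hInt]
    calc (∫ x, (p * (star (u x) * v x)).re) = ∫ x, c * ‖v x‖ ^ 2 :=
          integral_congr_ae (Filter.Eventually.of_forall fun x => hpoint x)
      _ = c * ∫ x, ‖v x‖ ^ 2 := integral_const_mul c _
      _ = c := by rw [hv_norm, mul_one]
  -- ‖Cor‖ ≤ 1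
  have hCor_le : ‖Cor‖ ≤ 1 := by
    rw [hCor]
    calc ‖∫ x, star (u x) * v x‖ ≤ ∫ x, ‖star (u x) * v x‖ := norm_integral_le_integral_norm _
      _ = ∫ x, ‖v x‖ ^ 2 :=
          integral_congr_ae (Filter.Eventually.of_forall fun x => hnorm_uv x)
      _ = 1 := hv_norm
  set N := ‖Cor‖ with hN
  have hN0 : 0 ≤ N := norm_nonneg _
  -- polar decomposition of re (p * Cor)
  have hexp : (p * ((Real.cos φ : ℍ[ℝ]) + Real.sin φ • Q)).re =
      Real.cos φ * c + Real.sin φ * (p * Q).re := by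
    simp only [mul_add, Quaternion.re_add, Quaternion.mul_coe_eq_smul, mul_smul_comm,
      Quaternion.re_smul, smul_eq_mul, hpre]
  have hpolar_re : c = N * (Real.cos φ * c + Real.sin φ * (p * Q).re) := by
    conv_lhs => rw [← hre_pCor]
    rw [hpolar, mul_smul_comm, Quaternion.re_smul, hexp, smul_eq_mul]
  have hX : (p * q).re = c2 * c + s2 * (p * Q).re := by
    rw [hqdef]
    simp only [mul_add, Quaternion.re_add, Quaternion.mul_coe_eq_smul, mul_smul_comm,
      Quaternion.re_smul, smul_eq_mul, hpre]
  -- double angle formulas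
  have hcos2 : Real.cos φ = 2 * c2 ^ 2 - 1 := by
    have h2 : Real.cos (2 * (φ / 2)) = 2 * c2 ^ 2 - 1 := Real.cos_two_mul _
    rwa [show 2 * (φ / 2) = φ by ring] at h2
  have hsin2 : Real.sin φ = 2 * s2 * c2 := by
    have h2 : Real.sin (2 * (φ / 2)) = 2 * s2 * c2 := Real.sin_two_mul _
    rwa [show 2 * (φ / 2) = φ by ring] at h2
  have hcq0 : 0 ≤ c2 := Real.cos_nonneg_of_mem_Icc ⟨by linarith, by linarith⟩
  have hcq1 : c2 ≤ 1 := Real.cos_le_one _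
  have hNpos : 0 < N := by
    rcases hN0.lt_or_eq with h | h
    · exact h
    · exfalso; rw [← h, zero_mul] at hpolar_re; linarith
  rw [hcos2, hsin2] at hpolar_re
  have hkey : N * c2 * ((p * q).re) * 2 = c * (1 + N) := by
    rw [hX]; linear_combination -hpolar_re
  have h1 : 2 * N * c ≤ c * (1 + N) := by nlinarith
  have h2 : 2 * N * c ≤ 2 * N * (c2 * (p * q).re) := by linarith
  have hcqX : c ≤ c2 * (p * q).re := by
    by_contra hlt
    push_neg at hlt
    have h3 := mul_lt_mul_of_pos_left hlt (show (0:ℝ) < 2 * N by positivity)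
    nlinarith
  have hXpos : 0 < (p * q).re := by nlinarith
  have hXc : c ≤ (p * q).re := by nlinarith
  have habs : c ≤ |(p * q).re| := le_trans hXc (le_abs_self _)
  have harc : Real.arccos |(p * q).re| ≤ α / 2 := by
    calc Real.arccos |(p * q).re| = Real.pi / 2 - Real.arcsin |(p * q).re| :=
          Real.arccos_eq_pi_div_two_sub_arcsin _
      _ ≤ Real.pi / 2 - Real.arcsin c := by
          have := Real.monotone_arcsin habs; linarith
      _ = Real.arccos c := (Real.arccos_eq_pi_div_two_sub_arcsin _).symm
      _ = α / 2 := by rw [hc]; exact Real.arccos_cos (by linarith) (by linarith)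
  linarith
end

section
/- Under the hypotheses of the previous lemma (v ∈ L² with ‖v‖ = 1, outer rotation by α ∈ [0, π) in plane P, with the component v∥ of v in the plane P having nonzero L² norm), define β : [0, π) → [0, π) by β(α) = 2·arg(exp(αP/2)·exp(φ(α)Q(α)/2)), where exp(φQ) is the normalized geometric cross correlation of R_{P,α}(v) with v at the origin. Then the iteration α₀ = α, α_{n+1} = β(α_n) converges to 0. -/
set_option maxHeartbeats 2000000

open MeasureTheory Quaternion Filter RealInnerProductSpace

/-- The rotor exp(aB/2) of Cl(3,0) in the quaternion model: for a unit
bivector (unit imaginary quaternion) B it is cos(a/2) + sin(a/2)·B. -/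
noncomputable def rotorQ (B : ℍ[ℝ]) (a : ℝ) : ℍ[ℝ] :=
  (Real.cos (a / 2) : ℍ[ℝ]) + Real.sin (a / 2) • B

/-- The geometric cross correlation (R_{P,a}(v) ⋆ v)(0) = ∫ reverse(R_{P,a}(v)(x)) v(x) dx
of the outer-rotated copy R_{P,a}(v)(x) = exp(−aP/2) v(x) exp(aP/2) with v,
in the quaternion model. -/
noncomputable def corQ {m : ℕ} (v : EuclideanSpace ℝ (Fin m) → ℍ[ℝ])
    (P : ℍ[ℝ]) (a : ℝ) : ℍ[ℝ] :=
  ∫ x, star (star (rotorQ P a) * v x * rotorQ P a) * v x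

/-- The angle φ(a) of the polar form e^{φQ} of the normalized correlation. -/
noncomputable def phiQ {m : ℕ} (v : EuclideanSpace ℝ (Fin m) → ℍ[ℝ])
    (P : ℍ[ℝ]) (a : ℝ) : ℝ :=
  Real.arccos ((corQ v P a).re / ‖corQ v P a‖)

/-- The unit bivector Q(a) of the polar form e^{φQ} of the correlation. -/
noncomputable def bivQ {m : ℕ} (v : EuclideanSpace ℝ (Fin m) → ℍ[ℝ])
    (P : ℍ[ℝ]) (a : ℝ) : ℍ[ℝ] :=
  ‖(corQ v P a).im‖⁻¹ • (corQ v P a).im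

/-- β(a) = 2 arg(exp(aP/2) exp(φ(a)Q(a)/2)): the rotation angle of the
composed rotor, the remaining misalignment after applying the correlation
rotor. -/
noncomputable def betaQ {m : ℕ} (v : EuclideanSpace ℝ (Fin m) → ℍ[ℝ])
    (P : ℍ[ℝ]) (a : ℝ) : ℝ :=
  2 * Real.arccos |(rotorQ P a * rotorQ (bivQ v P a) (phiQ v P a)).re|

namespace Stmt11Aux

/-! ### Pointwise quaternion algebra lemmas -/

lemma norm_sq_eq (q : ℍ[ℝ]) : ‖q‖^2 = q.re^2 + q.imI^2 + q.imJ^2 + q.imK^2 := by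
  rw [sq, ← Quaternion.normSq_eq_norm_mul_self, Quaternion.normSq_def']

lemma abs_re_le_norm (q : ℍ[ℝ]) : |q.re| ≤ ‖q‖ := by
  have h1 : q.re^2 ≤ ‖q‖^2 := by
    rw [norm_sq_eq]; nlinarith [sq_nonneg q.imI, sq_nonneg q.imJ, sq_nonneg q.imK]
  calc |q.re| = Real.sqrt (q.re^2) := (Real.sqrt_sq_eq_abs _).symm
    _ ≤ Real.sqrt (‖q‖^2) := Real.sqrt_le_sqrt h1
    _ = ‖q‖ := Real.sqrt_sq (norm_nonneg q)

lemma PP_eq (P : ℍ[ℝ]) (hP : P.re = 0) (hP1 : ‖P‖ = 1) : P * P = -1 := by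
  have h1 : P.imI^2 + P.imJ^2 + P.imK^2 = 1 := by
    have h2 := norm_sq_eq P; rw [hP1, hP] at h2; nlinarith [h2]
  ext <;>
    simp only [Quaternion.re_mul, Quaternion.imI_mul, Quaternion.imJ_mul, Quaternion.imK_mul,
      Quaternion.re_neg, Quaternion.imI_neg, Quaternion.imJ_neg, Quaternion.imK_neg,
      Quaternion.re_one, Quaternion.imI_one, Quaternion.imJ_one, Quaternion.imK_one, hP] <;>
    linarith [h1]

lemma neg_sq_eq (q : ℍ[ℝ]) (h : q.re = 0) : -(q*q) = ((‖q‖^2 : ℝ) : ℍ[ℝ]) := by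
  have h3 : ‖q‖^2 = q.imI^2 + q.imJ^2 + q.imK^2 := by rw [norm_sq_eq, h]; ring
  ext <;>
    simp only [Quaternion.re_neg, Quaternion.imI_neg, Quaternion.imJ_neg, Quaternion.imK_neg,
      Quaternion.re_mul, Quaternion.imI_mul, Quaternion.imJ_mul, Quaternion.imK_mul,
      Quaternion.re_coe, Quaternion.imI_coe, Quaternion.imJ_coe, Quaternion.imK_coe, h] <;>
    first
      | linear_combination h3
      | linear_combination -h3
      | ring

lemma qPq_re (P q : ℍ[ℝ]) (hP : P.re = 0) (h : q.re = 0) : (q*P*q).re = 0 := by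
  simp only [Quaternion.re_mul, Quaternion.imI_mul, Quaternion.imJ_mul, Quaternion.imK_mul, hP, h]
  ring

lemma mul_re_eq_neg_inner (p w : ℍ[ℝ]) (hp : p.re = 0) (hw : w.re = 0) :
    (p * w).re = -⟪p, w⟫ := by
  simp only [Quaternion.inner_def, Quaternion.re_mul, Quaternion.re_star, Quaternion.imI_star,
    Quaternion.imJ_star, Quaternion.imK_star, hp, hw]
  ring

lemma inner_qPq (P q : ℍ[ℝ]) (hP : P.re = 0) (hP1 : ‖P‖ = 1) (h : q.re = 0) :
    ⟪P, q*P*q⟫ = ‖q‖^2 - 2*⟪P,q⟫^2 := by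
  have h1 : P.imI^2 + P.imJ^2 + P.imK^2 = 1 := by
    have h2 := norm_sq_eq P; rw [hP1, hP] at h2; nlinarith [h2]
  have h3 : ‖q‖^2 = q.imI^2 + q.imJ^2 + q.imK^2 := by rw [norm_sq_eq, h]; ring
  rw [h3]
  simp only [Quaternion.inner_def, Quaternion.re_mul,
    Quaternion.imI_mul, Quaternion.imJ_mul, Quaternion.imK_mul, Quaternion.re_star,
    Quaternion.imI_star, Quaternion.imJ_star, Quaternion.imK_star, hP, h]
  ring_nf
  linear_combination (q.imI^2 + q.imJ^2 + q.imK^2) * h1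

lemma inner_self_mul (p w : ℍ[ℝ]) (hp : p.re = 0) (hw : w.re = 0) : ⟪p, p*w⟫ = 0 := by
  simp only [Quaternion.inner_def, Quaternion.re_mul, Quaternion.imI_mul, Quaternion.imJ_mul,
    Quaternion.imK_mul, Quaternion.re_star, Quaternion.imI_star, Quaternion.imJ_star,
    Quaternion.imK_star, hp, hw]
  ring

lemma inner_right_mul (p w : ℍ[ℝ]) (hp : p.re = 0) (hw : w.re = 0) : ⟪w, p*w⟫ = 0 := by
  simp only [Quaternion.inner_def, Quaternion.re_mul, Quaternion.imI_mul, Quaternion.imJ_mul,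
    Quaternion.imK_mul, Quaternion.re_star, Quaternion.imI_star, Quaternion.imJ_star,
    Quaternion.imK_star, hp, hw]
  ring

lemma coe_inner (r : ℝ) (x : ℍ[ℝ]) : ⟪((r:ℝ) : ℍ[ℝ]), x⟫ = r * x.re := by
  simp only [Quaternion.inner_def, Quaternion.re_mul, Quaternion.re_coe, Quaternion.imI_coe,
    Quaternion.imJ_coe, Quaternion.imK_coe, Quaternion.re_star]
  ring

lemma im_add_coe (r : ℝ) (x : ℍ[ℝ]) (hx : x.re = 0) : ((r : ℍ[ℝ]) + x).im = x := by
  ext <;> simp [hx]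

lemma norm_rotor (B : ℍ[ℝ]) (hB : B.re = 0) (hB1 : ‖B‖ = 1) (θ : ℝ) : ‖rotorQ B θ‖ = 1 := by
  have h1 : B.imI^2 + B.imJ^2 + B.imK^2 = 1 := by
    have h2 := norm_sq_eq B; rw [hB1, hB] at h2; nlinarith [h2]
  have h3 : ‖rotorQ B θ‖^2 = 1 := by
    rw [norm_sq_eq]
    simp only [rotorQ, Quaternion.re_add, Quaternion.imI_add, Quaternion.imJ_add,
      Quaternion.imK_add, Quaternion.re_smul, Quaternion.imI_smul, Quaternion.imJ_smul,
      Quaternion.imK_smul, Quaternion.re_coe, Quaternion.imI_coe, Quaternion.imJ_coe,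
      Quaternion.imK_coe, smul_eq_mul, hB]
    have h4 := Real.sin_sq_add_cos_sq (θ/2)
    nlinarith [h1, h4]
  nlinarith [h3, norm_nonneg (rotorQ B θ)]

lemma rotor_mul_re (B W : ℍ[ℝ]) (θ ψ : ℝ) (r : ℝ) :
    (rotorQ B θ * rotorQ (r • W) ψ).re
      = Real.cos (θ/2) * Real.cos (ψ/2) + Real.sin (θ/2) * Real.cos (ψ/2) * B.re
        + Real.cos (θ/2) * (Real.sin (ψ/2) * r) * W.re
        + Real.sin (θ/2) * (Real.sin (ψ/2) * r) * (B*W).re := by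
  simp only [rotorQ, Quaternion.re_mul, Quaternion.re_add, Quaternion.imI_add, Quaternion.imJ_add,
    Quaternion.imK_add, Quaternion.re_smul, Quaternion.imI_smul, Quaternion.imJ_smul,
    Quaternion.imK_smul, Quaternion.re_coe, Quaternion.imI_coe, Quaternion.imJ_coe,
    Quaternion.imK_coe, smul_eq_mul]
  ring

lemma rotor_expand (P q : ℍ[ℝ]) (hP : P.re = 0) (hq : q.re = 0) (a : ℝ) :
    star (star (rotorQ P a) * q * rotorQ P a) * q
      = (Real.cos (a/2)^2) • (-(q*q)) + ((Real.cos (a/2) * Real.sin (a/2)) • (P*(q*q) - q*P*q)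
        + (Real.sin (a/2)^2) • (P*(q*P*q))) := by
  ext <;>
    simp only [rotorQ, Quaternion.re_add, Quaternion.imI_add, Quaternion.imJ_add,
      Quaternion.imK_add, Quaternion.re_sub, Quaternion.imI_sub, Quaternion.imJ_sub,
      Quaternion.imK_sub, Quaternion.re_neg, Quaternion.imI_neg, Quaternion.imJ_neg,
      Quaternion.imK_neg, Quaternion.re_star, Quaternion.imI_star, Quaternion.imJ_star,
      Quaternion.imK_star, Quaternion.re_smul, Quaternion.imI_smul, Quaternion.imJ_smul,
      Quaternion.imK_smul, Quaternion.re_mul, Quaternion.imI_mul, Quaternion.imJ_mul,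
      Quaternion.imK_mul, Quaternion.re_coe, Quaternion.imI_coe, Quaternion.imJ_coe,
      Quaternion.imK_coe, smul_eq_mul, hP, hq] <;>
    ring

/-! ### Continuous linear maps and integral commutation -/

/-- real part as a continuous linear map -/
noncomputable def reCLM : ℍ[ℝ] →L[ℝ] ℝ :=
  LinearMap.mkContinuous
    { toFun := fun q => q.re
      map_add' := fun a b => rfl
      map_smul' := fun r a => rfl } 1
    (fun q => by show ‖q.re‖ ≤ 1 * ‖q‖; simpa using abs_re_le_norm q)

@[simp] lemma reCLM_apply (q : ℍ[ℝ]) : reCLM q = q.re := rfl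

/-- coercion ℝ → ℍ as a continuous linear map -/
noncomputable def coeCLM : ℝ →L[ℝ] ℍ[ℝ] :=
  { Algebra.linearMap ℝ ℍ[ℝ] with cont := Quaternion.continuous_coe }

@[simp] lemma coeCLM_apply (r : ℝ) : coeCLM r = (r : ℍ[ℝ]) := rfl

variable {α : Type*} [MeasurableSpace α] {μ : Measure α}

lemma integral_re {f : α → ℍ[ℝ]} (hf : Integrable f μ) :
    (∫ x, f x ∂μ).re = ∫ x, (f x).re ∂μ := (reCLM.integral_comp_comm hf).symm

lemma integral_quat_coe {g : α → ℝ} (hg : Integrable g μ) :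
    (∫ x, ((g x : ℝ) : ℍ[ℝ]) ∂μ) = ((∫ x, g x ∂μ : ℝ) : ℍ[ℝ]) := coeCLM.integral_comp_comm hg

lemma integral_quat_const_mul (c : ℍ[ℝ]) {f : α → ℍ[ℝ]} (hf : Integrable f μ) :
    (∫ x, c * f x ∂μ) = c * ∫ x, f x ∂μ := by
  simpa using (ContinuousLinearMap.integral_comp_comm (ContinuousLinearMap.mul ℝ ℍ[ℝ] c) hf)

/-! ### The core real inequality -/

lemma core_ineq (A U2 S C σ N : ℝ) (hA0 : 0 < A) (hA1 : A ≤ 1) (hU0 : 0 ≤ U2)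
    (hU : U2 ≤ A*(1-A)) (hS : 0 < S) (hC : 0 < C) (htrig : S^2 + C^2 = 1)
    (hσ : σ = 1 - 2*(A*S^2)) (hN0 : 0 ≤ N) (hN : N^2 = σ^2 + 4*S^2*(A^2*C^2 + U2)) :
    (A^2*C^2+U2)*(N-σ) < A^2*S^2*(3*N+σ) := by
  have hK0 : 0 < A^2*C^2+U2 := by positivity
  have hS1 : S^2 < 1 := by nlinarith
  have hNsq : N^2 = 1 - 4*S^2*(A*(1-A)-U2) := by
    rw [hN, hσ]; linear_combination (4*S^2*A^2)*htrig
  have hN1 : N ≤ 1 := by nlinarith [mul_nonneg (sq_nonneg S) (by linarith : (0:ℝ) ≤ A*(1-A)-U2)]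
  have h4 : 0 < 4*S^2*(A^2*C^2+U2) := by positivity
  have hNpos : 0 < N := by nlinarith [sq_nonneg σ]
  have hNσ : σ < N := by
    by_contra h
    push_neg at h
    have : N^2 ≤ σ^2 := by nlinarith
    linarith
  have hf' : 0 < (4*(A*S^2)-1)*N + σ := by
    rcases le_or_gt (A*S^2) (1/4) with h | h
    · nlinarith [mul_nonneg (sub_nonneg.2 hN1) (by linarith : (0:ℝ) ≤ 1-4*(A*S^2))]
    · rcases le_or_gt (A*S^2) (1/2) with h2 | h2
      · nlinarith [mul_pos (by linarith : (0:ℝ) < 4*(A*S^2)-1) hNpos]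
      · have habs : -σ < N := by
          by_contra h3
          push_neg at h3
          have : N^2 ≤ σ^2 := by nlinarith
          linarith
        nlinarith [mul_lt_mul_of_pos_left habs (by linarith : (0:ℝ) < 4*(A*S^2)-1)]
  have hKle : A^2*C^2+U2 ≤ A*(1-A*S^2) := by nlinarith
  have key : A^2*S^2*(3*N+σ) - (A^2*C^2+U2)*(N-σ)
      = (A*(1-A*S^2) - (A^2*C^2+U2))*(N-σ) + A*((4*(A*S^2)-1)*N + σ) := by ring
  have t1 : 0 ≤ (A*(1-A*S^2) - (A^2*C^2+U2))*(N-σ) :=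
    mul_nonneg (sub_nonneg.2 hKle) (sub_nonneg.2 hNσ.le)
  have t2 : 0 < A*((4*(A*S^2)-1)*N + σ) := mul_pos hA0 hf'
  linarith

lemma X_gt (A U2 S C σ M N : ℝ) (hA0 : 0 < A) (hA1 : A ≤ 1) (hU0 : 0 ≤ U2)
    (hU : U2 ≤ A*(1-A)) (hS : 0 < S) (hC : 0 < C) (htrig : S^2 + C^2 = 1)
    (hσ : σ = 1 - 2*(A*S^2)) (hM0 : 0 ≤ M) (hM : M^2 = 4*S^2*(A^2*C^2 + U2))
    (hN0 : 0 ≤ N) (hN : N^2 = σ^2 + M^2) :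
    C < C * Real.sqrt ((1+σ/N)/2) + S * (Real.sqrt ((1-σ/N)/2) * (M⁻¹ * (2*A*C*S))) := by
  have hN' : N^2 = σ^2 + 4*S^2*(A^2*C^2+U2) := by rw [hN, hM]
  have hcore := core_ineq A U2 S C σ N hA0 hA1 hU0 hU hS hC htrig hσ hN0 hN'
  have hK0 : 0 < A^2*C^2+U2 := by positivity
  have hM2pos : 0 < M^2 := by rw [hM]; positivity
  have hMpos : 0 < M := lt_of_le_of_ne hM0 (by intro h; rw [← h] at hM2pos; simp at hM2pos)
  have hNpos : 0 < N := by nlinarith [sq_nonneg σ]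
  have hNσ : σ < N := by
    by_contra h
    push_neg at h
    have : N^2 ≤ σ^2 := by nlinarith
    linarith
  have hNσ' : -N < σ := by
    by_contra h
    push_neg at h
    have : N^2 ≤ σ^2 := by nlinarith
    linarith
  set p := Real.sqrt ((1+σ/N)/2) with hpdef
  set q := Real.sqrt ((1-σ/N)/2) with hqdef
  have hdivlt : σ/N < 1 := (div_lt_one hNpos).2 hNσ
  have hdivgt : -1 < σ/N := by rw [neg_lt, ← neg_div]; exact (div_lt_one hNpos).2 (by linarith)
  have hp0 : 0 ≤ p := Real.sqrt_nonneg _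
  have hq0 : 0 < q := Real.sqrt_pos.2 (by linarith)
  have hp2 : p^2 = (1+σ/N)/2 := Real.sq_sqrt (by linarith)
  have hq2 : q^2 = (1-σ/N)/2 := Real.sq_sqrt (by linarith)
  have hp1 : p ≤ 1 := by nlinarith
  have hs1 : (M*q)^2 < (2*A*S^2*(1+p))^2 := by
    have e1 : (M*q)^2 = M^2*(1-σ/N)/2 := by rw [mul_pow, hq2]; ring
    have e2 : (2*A*S^2*(1+p))^2 = 4*A^2*S^4*(1+2*p+p^2) := by ring
    rw [e1, e2, hp2]
    have base : M^2*(1-σ/N)/2 < 4*A^2*S^4*(1+(1+σ/N)/2) := by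
      rw [hM]
      have expand1 : 4*S^2*(A^2*C^2+U2)*(1-σ/N)/2 = (2*S^2/N)*((A^2*C^2+U2)*(N-σ)) := by
        field_simp; ring
      have expand2 : 4*A^2*S^4*(1+(1+σ/N)/2) = (2*S^2/N)*(A^2*S^2*(3*N+σ)) := by
        field_simp; ring
      rw [expand1, expand2]
      exact mul_lt_mul_of_pos_left hcore (by positivity)
    nlinarith [base, mul_nonneg (by positivity : (0:ℝ) ≤ 8*A^2*S^4) hp0]
  have hs1' : M*q < 2*A*S^2*(1+p) := by
    have h2 : 0 ≤ 2*A*S^2*(1+p) := by positivity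
    nlinarith [mul_nonneg (mul_nonneg hMpos.le hq0.le) h2]
  have hs2 : M*(1-p) < 2*A*S^2*q := by
    have hpq : p^2 + q^2 = 1 := by rw [hp2, hq2]; ring
    have h1p : 0 < 1+p := by linarith
    have hmul : M*q*q < 2*A*S^2*(1+p)*q := mul_lt_mul_of_pos_right hs1' hq0
    have e3 : M*(1-p)*(1+p) = M*q*q := by linear_combination (-M) * hpq
    have hmul2 : M*(1-p)*(1+p) < (2*A*S^2*q)*(1+p) := by
      rw [e3]; nlinarith [hmul]
    exact lt_of_mul_lt_mul_right hmul2 h1p.le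
  have hfin : 0 < C*(p-1) + S*(q*(M⁻¹*(2*A*C*S))) := by
    have e4 : C*(p-1) + S*(q*(M⁻¹*(2*A*C*S))) = (C/M)*(2*A*S^2*q - M*(1-p)) := by
      field_simp; ring
    rw [e4]
    exact mul_pos (by positivity) (by linarith)
  linarith

end Stmt11Aux

open Stmt11Aux

/-- Theorem 3 of the paper: for a square-integrable vector field v of unit L²
norm whose component parallel to the plane of the unit bivector P has nonzero
L² norm, the iteration α₀ = α, α_{n+1} = β(α_n) of remaining misalignment
angles under iterative geometric correlation converges to 0, for every
α ∈ [0,π). -/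
theorem stmt_11 {m : ℕ} (v : EuclideanSpace ℝ (Fin m) → ℍ[ℝ])
    (hv_vec : ∀ x, (v x).re = 0)
    (hv_L2 : MemLp v 2 volume)
    (hv_norm : (∫ x, ‖v x‖ ^ 2) = 1)
    (P : ℍ[ℝ]) (hP_biv : P.re = 0) (hP_unit : ‖P‖ = 1)
    (hv_par : (∫ x, ‖v x - ⟪P, v x⟫ • P‖ ^ 2) ≠ 0)
    (α : ℝ) (hα : α ∈ Set.Ico 0 Real.pi)
    (seq : ℕ → ℝ) (hseq0 : seq 0 = α)
    (hseqS : ∀ n, seq (n + 1) = betaQ v P (seq n)) :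
    Tendsto seq atTop (nhds 0) := by
  have hv_meas := hv_L2.aestronglyMeasurable
  have hInt2 : Integrable (fun x => ‖v x‖^2) := (memLp_two_iff_integrable_sq_norm hv_meas).mp hv_L2
  have hvv : Integrable (fun x => v x * v x) := by
    refine Integrable.mono' hInt2 (hv_meas.mul hv_meas) ?_
    filter_upwards with x
    exact le_of_eq (by rw [norm_mul, sq])
  have hvPv : Integrable (fun x => v x * P * v x) := by
    refine Integrable.mono' hInt2 ((hv_meas.mul aestronglyMeasurable_const).mul hv_meas) ?_
    filter_upwards with x
    exact le_of_eq (by rw [norm_mul, norm_mul, hP_unit]; ring)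
  have hnegvv : Integrable (fun x => -(v x * v x)) := hvv.neg
  have hPvv : Integrable (fun x => P * (v x * v x)) := hvv.const_mul P
  have hPvPv : Integrable (fun x => P * (v x * P * v x)) := hvPv.const_mul P
  have hI2int : Integrable (fun x => P*(v x*v x) - v x*P*v x) := hPvv.sub hvPv
  -- ∫ -(v·v) = 1
  have hint1 : (∫ x, -(v x * v x)) = ((1:ℝ) : ℍ[ℝ]) := by
    rw [show (fun x => -(v x*v x)) = fun x => ((‖v x‖^2:ℝ):ℍ[ℝ]) from
      funext fun x => neg_sq_eq _ (hv_vec x)]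
    rw [integral_quat_coe hInt2, hv_norm]
  have hintvv : (∫ x, v x * v x) = ((-1:ℝ) : ℍ[ℝ]) := by
    have h := hint1
    rw [integral_neg] at h
    have := neg_eq_iff_eq_neg.mp h
    rw [this]
    push_cast
    ring
  set J := ∫ x, v x * P * v x with hJdef
  -- the correlation formula
  have hcorQ : ∀ a : ℝ, corQ v P a
      = (Real.cos (a/2)^2) • (1:ℍ[ℝ]) + ((Real.cos (a/2)*Real.sin (a/2)) • (-P - J)
        + (Real.sin (a/2)^2) • (P * J)) := by
    intro a
    rw [corQ]
    rw [show (fun x => star (star (rotorQ P a) * v x * rotorQ P a) * v x)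
        = fun x => (Real.cos (a/2)^2) • (-(v x*v x))
          + ((Real.cos (a/2)*Real.sin (a/2)) • (P*(v x*v x) - v x*P*v x)
          + (Real.sin (a/2)^2) • (P*(v x*P*v x))) from
      funext fun x => rotor_expand P (v x) hP_biv (hv_vec x) a]
    have ha1 : Integrable (fun x => (Real.cos (a/2)^2) • (-(v x*v x))) volume := hnegvv.smul (Real.cos (a/2)^2)
    have ha2 : Integrable
        (fun x => (Real.cos (a/2)*Real.sin (a/2)) • (P*(v x*v x) - v x*P*v x)) volume :=
      hI2int.smul (Real.cos (a/2)*Real.sin (a/2))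
    have ha3 : Integrable (fun x => (Real.sin (a/2)^2) • (P*(v x*P*v x))) volume := hPvPv.smul (Real.sin (a/2)^2)
    have ha23 : Integrable (fun x => (Real.cos (a/2)*Real.sin (a/2)) • (P*(v x*v x) - v x*P*v x)
        + (Real.sin (a/2)^2) • (P*(v x*P*v x))) volume := ha2.add ha3
    rw [integral_add ha1 ha23]
    rw [integral_add ha2 ha3, integral_smul, integral_smul,
      integral_smul, hint1, integral_sub hPvv hvPv, integral_quat_const_mul P hvv,
      integral_quat_const_mul P hvPv, hintvv, ← hJdef]
    rw [show ((1:ℝ):ℍ[ℝ]) = 1 from by norm_cast,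
      show P * ((-1:ℝ):ℍ[ℝ]) = -P from by push_cast; rw [mul_neg_one]]
  -- facts about J
  have hJre : J.re = 0 := by
    rw [hJdef, integral_re hvPv]
    rw [show (fun x => (v x*P*v x).re) = fun _ => (0:ℝ) from
      funext fun x => qPq_re P (v x) hP_biv (hv_vec x)]
    simp
  have hJnorm : ‖J‖ ≤ 1 := by
    calc ‖J‖ ≤ ∫ x, ‖v x*P*v x‖ := norm_integral_le_integral_norm _
      _ = ∫ x, ‖v x‖^2 := by
          congr 1
          funext x
          rw [norm_mul, norm_mul, hP_unit]; ring
      _ = 1 := hv_norm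
  have hIntc : Integrable (fun x => ⟪P, v x⟫^2) := (hv_L2.const_inner P).integrable_sq
  set Bc := ∫ x, ⟪P, v x⟫^2 with hBcdef
  have hBc0 : 0 ≤ Bc := integral_nonneg fun x => sq_nonneg _
  have hPP : ⟪P, P⟫ = 1 := by rw [real_inner_self_eq_norm_sq, hP_unit]; norm_num
  have hDval : ⟪P, J⟫ = 1 - 2*Bc := by
    rw [hJdef, ← integral_inner hvPv]
    rw [show (fun x => ⟪P, v x*P*v x⟫) = fun x => ‖v x‖^2 - 2*⟪P, v x⟫^2 from
      funext fun x => inner_qPq P (v x) hP_biv hP_unit (hv_vec x)]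
    rw [integral_sub hInt2 (hIntc.const_mul 2), integral_const_mul, hv_norm, ← hBcdef]
  set A := 1 - Bc with hAdef
  have hApar : (∫ x, ‖v x - ⟪P, v x⟫ • P‖^2) = A := by
    rw [show (fun x => ‖v x - ⟪P,v x⟫•P‖^2) = fun x => ‖v x‖^2 - ⟪P,v x⟫^2 from
      funext fun x => ?_]
    · rw [integral_sub hInt2 hIntc, hv_norm, hAdef]
    · rw [norm_sub_sq_real, real_inner_smul_right, norm_smul, hP_unit, real_inner_comm (v x) P]
      simp only [Real.norm_eq_abs, mul_one]
      rw [sq_abs]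
      ring
  have hA0 : 0 < A := by
    rcases (integral_nonneg (μ := volume) (f := fun x => ‖v x - ⟪P, v x⟫ • P‖^2) (fun x => sq_nonneg ‖v x - ⟪P, v x⟫ • P‖)).lt_or_eq with h | h
    · rwa [hApar] at h
    · exact absurd (hApar ▸ h.symm) hv_par
  have hA1 : A ≤ 1 := by rw [hAdef]; linarith only [hBc0]
  set D := 1 - 2*Bc with hDdef
  have hPJ : ⟪P, J⟫ = D := by rw [hDval, hDdef]
  have hDA : D = 2*A - 1 := by rw [hDdef, hAdef]; ring
  set u := (2:ℝ)⁻¹ • (D • P - J) with hudef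
  have hJu : J = D • P - (2:ℝ) • u := by rw [hudef]; module
  have hure : u.re = 0 := by
    rw [hudef]
    simp [Quaternion.re_smul, Quaternion.re_sub, hP_biv, hJre, smul_eq_mul]
  have hPu : ⟪P, u⟫ = 0 := by
    rw [hudef, real_inner_smul_right, inner_sub_right, real_inner_smul_right, hPP, hPJ]
    ring
  set U2 := ‖u‖^2 with hU2def
  have hU20 : 0 ≤ U2 := by rw [hU2def]; positivity
  have hU2 : U2 ≤ A*(1-A) := by
    have horth : ⟪D•P, (2:ℝ)•u⟫ = (0:ℝ) := by
      rw [real_inner_smul_left, real_inner_smul_right, hPu]; ring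
    have hexp := norm_sub_sq_real (D•P) ((2:ℝ)•u)
    rw [← hJu, horth] at hexp
    have hDP : ‖D•P‖^2 = D^2 := by
      rw [norm_smul, hP_unit, mul_one, Real.norm_eq_abs, sq_abs]
    have h2u : ‖(2:ℝ)•u‖^2 = 4*U2 := by
      rw [norm_smul, Real.norm_eq_abs, abs_of_nonneg (by norm_num : (0:ℝ) ≤ 2), mul_pow, hU2def]
      ring
    have hJ2 : ‖J‖^2 ≤ 1 := by nlinarith [hJnorm, norm_nonneg J]
    rw [hDP, h2u, hDA] at hexp
    nlinarith only [hexp, hJ2]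
  -- the explicit real function g
  set g : ℝ → ℝ := fun b =>
    2 * Real.arccos |Real.cos (b/2) * Real.cos (Real.arccos
        ((Real.cos (b/2)^2 - Real.sin (b/2)^2*D) /
          Real.sqrt ((Real.cos (b/2)^2 - Real.sin (b/2)^2*D)^2
            + 4*Real.sin (b/2)^2*(A^2*Real.cos (b/2)^2 + U2))) / 2)
      + Real.sin (b/2) * (Real.sin (Real.arccos
        ((Real.cos (b/2)^2 - Real.sin (b/2)^2*D) /
          Real.sqrt ((Real.cos (b/2)^2 - Real.sin (b/2)^2*D)^2
            + 4*Real.sin (b/2)^2*(A^2*Real.cos (b/2)^2 + U2))) / 2)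
        * ((Real.sqrt (4*Real.sin (b/2)^2*(A^2*Real.cos (b/2)^2 + U2)))⁻¹
          * (2*A*Real.cos (b/2)*Real.sin (b/2))))| with hgdef
  -- the per-angle key facts
  have hkey : ∀ a, a ∈ Set.Ioo 0 Real.pi → betaQ v P a = g a ∧ betaQ v P a < a := by
    intro a ha
    obtain ⟨ha0, haπ⟩ := ha
    set C' := Real.cos (a/2) with hC'def
    set S' := Real.sin (a/2) with hS'def
    have hC'0 : 0 < C' := by
      rw [hC'def]
      exact Real.cos_pos_of_mem_Ioo
        ⟨by linarith only [Real.pi_pos, ha0], by linarith only [haπ, Real.pi_pos]⟩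
    have hS'0 : 0 < S' := by
      rw [hS'def]
      exact Real.sin_pos_of_pos_of_lt_pi (by linarith only [ha0])
        (by linarith only [haπ, Real.pi_pos])
    have htrig : S'^2 + C'^2 = 1 := Real.sin_sq_add_cos_sq (a/2)
    set σa := C'^2 - S'^2*D with hσadef
    set mm := (-(2*A*C'*S')) • P + ((2*C'*S') • u + (-(2*S'^2)) • (P*u)) with hmmdef
    -- correlation in polar-ready form
    have hPJ2 : P * J = (-D) • (1:ℍ[ℝ]) - (2:ℝ) • (P*u) := by
      rw [hJu, mul_sub, mul_smul_comm, mul_smul_comm, PP_eq P hP_biv hP_unit]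
      module
    have hcor_a : corQ v P a = ((σa:ℝ) : ℍ[ℝ]) + mm := by
      rw [hcorQ a, hPJ2, hJu]
      rw [show ((σa:ℝ) : ℍ[ℝ]) = σa • (1:ℍ[ℝ]) from by
        rw [← Quaternion.coe_one, Quaternion.smul_coe, mul_one]]
      rw [hσadef, hmmdef, hDA, ← hC'def, ← hS'def]
      module
    have hPure : (P*u).re = 0 := by
      rw [mul_re_eq_neg_inner P u hP_biv hure, hPu, neg_zero]
    have hmmre : mm.re = 0 := by
      rw [hmmdef]
      simp [Quaternion.re_add, Quaternion.re_smul, hP_biv, hure, hPure, smul_eq_mul]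
    have hre_a : (corQ v P a).re = σa := by
      rw [hcor_a]
      simp [Quaternion.re_add, Quaternion.re_coe, hmmre]
    have him_a : (corQ v P a).im = mm := by
      rw [hcor_a, im_add_coe _ _ hmmre]
    -- orthogonality
    have hPu2 : ⟪P, P*u⟫ = 0 := inner_self_mul P u hP_biv hure
    have huPu : ⟪u, P*u⟫ = 0 := inner_right_mul P u hP_biv hure
    have huP : ⟪u, P⟫ = 0 := by rw [real_inner_comm]; exact hPu
    have hPuP : ⟪P*u, P⟫ = 0 := by rw [real_inner_comm]; exact hPu2
    have hPuu : ⟪P*u, u⟫ = 0 := by rw [real_inner_comm]; exact huPu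
    have huu : ⟪u, u⟫ = U2 := by rw [real_inner_self_eq_norm_sq, hU2def]
    have hPuPu : ⟪P*u, P*u⟫ = U2 := by
      rw [real_inner_self_eq_norm_sq, norm_mul, hP_unit, one_mul, hU2def]
    -- norm of the imaginary part
    have hMsq : ‖mm‖^2 = 4*S'^2*(A^2*C'^2+U2) := by
      rw [← real_inner_self_eq_norm_sq, hmmdef]
      simp only [inner_add_left, inner_add_right, real_inner_smul_left, real_inner_smul_right,
        hPP, hPu, hPu2, huP, huu, huPu, hPuP, hPuu, hPuPu]
      linear_combination (4*S'^2*U2)*htrig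
    have hM2pos : 0 < ‖mm‖^2 := by rw [hMsq]; positivity
    have hM0 : 0 < ‖mm‖ := by
      rcases (norm_nonneg mm).lt_or_eq with h | h
      · exact h
      · exfalso; rw [← h] at hM2pos; simp at hM2pos
    have hMf : ‖mm‖ = Real.sqrt (4*S'^2*(A^2*C'^2+U2)) := by
      rw [← hMsq, Real.sqrt_sq (norm_nonneg mm)]
    -- norm of the correlation
    have hNsq : ‖corQ v P a‖^2 = σa^2 + ‖mm‖^2 := by
      rw [hcor_a, norm_add_sq_real, coe_inner, hmmre]
      have : ‖((σa:ℝ):ℍ[ℝ])‖ = |σa| := by rw [Quaternion.norm_coe, Real.norm_eq_abs]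
      rw [this, sq_abs]
      ring
    have hN0 : 0 < ‖corQ v P a‖ := by
      have h1 : 0 < ‖corQ v P a‖^2 := by rw [hNsq]; positivity
      rcases (norm_nonneg (corQ v P a)).lt_or_eq with h | h
      · exact h
      · exfalso; rw [← h] at h1; simp at h1
    have hNf : ‖corQ v P a‖ = Real.sqrt (σa^2 + 4*S'^2*(A^2*C'^2+U2)) := by
      rw [← hMsq, ← hNsq, Real.sqrt_sq (norm_nonneg _)]
    set N := ‖corQ v P a‖ with hNdef
    set M := ‖mm‖ with hMdef
    -- bounds on σa/N
    have hσN : σa < N := by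
      by_contra h
      push_neg at h
      have h2 : N^2 ≤ σa^2 := by nlinarith only [hN0, h]
      linarith only [h2, hNsq, hM2pos]
    have hσN' : -N < σa := by
      by_contra h
      push_neg at h
      have h2 : N^2 ≤ σa^2 := by nlinarith only [hN0, h]
      linarith only [h2, hNsq, hM2pos]
    have ht1 : -1 ≤ σa/N := by
      rw [neg_le, ← neg_div]
      exact le_of_lt ((div_lt_one hN0).2 (by linarith only [hσN']))
    have ht2 : σa/N ≤ 1 := le_of_lt ((div_lt_one hN0).2 hσN)
    -- the angle
    have hφ : phiQ v P a = Real.arccos (σa / N) := by rw [phiQ, hre_a]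
    have hφ0 : 0 ≤ phiQ v P a := by rw [hφ]; exact Real.arccos_nonneg _
    have hφπ : phiQ v P a ≤ Real.pi := by rw [hφ]; exact Real.arccos_le_pi _
    have hcosφ : Real.cos (phiQ v P a) = σa/N := by rw [hφ]; exact Real.cos_arccos ht1 ht2
    have hpf : Real.cos (phiQ v P a / 2) = Real.sqrt ((1 + σa/N)/2) := by
      rw [Real.cos_half (by linarith only [hφ0, Real.pi_pos]) hφπ, hcosφ]
    have hqf : Real.sin (phiQ v P a / 2) = Real.sqrt ((1 - σa/N)/2) := by
      rw [Real.sin_half_eq_sqrt hφ0 (by linarith only [hφπ, Real.pi_pos]), hcosφ]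
    -- the real part of the composed rotor
    have hbiv : bivQ v P a = M⁻¹ • mm := by rw [bivQ, him_a]
    have hPmm : (P*mm).re = 2*A*C'*S' := by
      rw [mul_re_eq_neg_inner P mm hP_biv hmmre, hmmdef]
      simp only [inner_add_right, real_inner_smul_right, hPP, hPu, hPu2]
      ring
    have hXval : (rotorQ P a * rotorQ (bivQ v P a) (phiQ v P a)).re
        = C' * Real.cos (phiQ v P a / 2)
          + S' * (Real.sin (phiQ v P a / 2) * (M⁻¹ * (2*A*C'*S'))) := by
      rw [hbiv, rotor_mul_re P mm a (phiQ v P a) M⁻¹, hP_biv, hmmre, hPmm, ← hC'def, ← hS'def]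
      ring
    set X := (rotorQ P a * rotorQ (bivQ v P a) (phiQ v P a)).re with hXdef
    -- the inequality X > C'
    have hσa' : σa = 1 - 2*(A*S'^2) := by
      rw [hσadef, hDA]
      linear_combination htrig
    have hXgt : C' < X := by
      rw [hXval, hpf, hqf]
      exact X_gt A U2 S' C' σa M N hA0 hA1 hU20 hU2 hS'0 hC'0 htrig hσa'
        (norm_nonneg mm) hMsq (norm_nonneg _) hNsq
    -- |X| ≤ 1
    have hbivre : (bivQ v P a).re = 0 := by
      rw [hbiv]
      simp [Quaternion.re_smul, hmmre]
    have hbivnorm : ‖bivQ v P a‖ = 1 := by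
      rw [hbiv, norm_smul, Real.norm_eq_abs, abs_of_pos (inv_pos.2 hM0), ← hMdef]
      field_simp
    have hXle : |X| ≤ 1 := by
      rw [hXdef]
      calc |(rotorQ P a * rotorQ (bivQ v P a) (phiQ v P a)).re|
          ≤ ‖rotorQ P a * rotorQ (bivQ v P a) (phiQ v P a)‖ := abs_re_le_norm _
        _ = 1 := by
            rw [norm_mul, norm_rotor P hP_biv hP_unit, norm_rotor _ hbivre hbivnorm, mul_one]
    -- betaQ < a
    have harc : Real.arccos |X| < a/2 := by
      by_contra h
      push_neg at h
      have h1 : Real.cos (Real.arccos |X|) ≤ Real.cos (a/2) :=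
        Real.cos_le_cos_of_nonneg_of_le_pi (by positivity) (Real.arccos_le_pi _) h
      rw [Real.cos_arccos (by linarith only [abs_nonneg X] : (-1:ℝ) ≤ |X|) hXle] at h1
      have hXabs : X ≤ |X| := le_abs_self X
      rw [← hC'def] at h1
      linarith only [h1, hXabs, hXgt]
    constructor
    · -- betaQ v P a = g a
      rw [betaQ, ← hXdef, hgdef]
      have hMfa : Real.sqrt (4*Real.sin (a/2)^2*(A^2*Real.cos (a/2)^2 + U2)) = M := by
        rw [← hC'def, ← hS'def]; exact hMf.symm
      have hNfa : Real.sqrt ((Real.cos (a/2)^2 - Real.sin (a/2)^2*D)^2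
          + 4*Real.sin (a/2)^2*(A^2*Real.cos (a/2)^2 + U2)) = N := by
        rw [← hC'def, ← hS'def, ← hσadef]; exact hNf.symm
      simp only [hMfa, hNfa, ← hC'def, ← hS'def, ← hσadef, ← hMf, ← hNf, ← hφ]
      rw [hXval]
    · -- betaQ v P a < a
      rw [betaQ, ← hXdef]
      linarith only [harc]
  -- value at 0
  have hbeta0 : betaQ v P 0 = 0 := by
    have hr0 : ∀ B : ℍ[ℝ], rotorQ B 0 = 1 := by
      intro B
      rw [rotorQ]
      norm_num
    have hcor0 : corQ v P 0 = 1 := by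
      rw [hcorQ 0]
      norm_num
    have hφ0 : phiQ v P 0 = 0 := by
      rw [phiQ, hcor0]
      simp [Quaternion.re_one]
    rw [betaQ, hφ0, hr0, bivQ, hcor0]
    simp [rotorQ]
  have hbeta_nonneg : ∀ a : ℝ, 0 ≤ betaQ v P a := fun a =>
    mul_nonneg (by norm_num) (Real.arccos_nonneg _)
  have hbeta_le : ∀ a ∈ Set.Ico 0 Real.pi, betaQ v P a ≤ a := by
    intro a ha
    rcases eq_or_lt_of_le ha.1 with h | h
    · rw [← h, hbeta0]
    · exact le_of_lt (hkey a ⟨h, ha.2⟩).2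
  -- the sequence stays in [0, π)
  have hmem : ∀ n, seq n ∈ Set.Ico 0 Real.pi := by
    intro n
    induction n with
    | zero => rw [hseq0]; exact hα
    | succ k ih =>
        rw [hseqS k]
        exact ⟨hbeta_nonneg _, lt_of_le_of_lt (hbeta_le _ ih) ih.2⟩
  have hanti : Antitone seq := antitone_nat_of_succ_le fun n => by
    rw [hseqS n]; exact hbeta_le _ (hmem n)
  have hbdd : BddBelow (Set.range seq) := ⟨0, fun y ⟨n, hn⟩ => hn ▸ (hmem n).1⟩
  have htend : Tendsto seq atTop (nhds (⨅ n, seq n)) := tendsto_atTop_ciInf hanti hbdd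
  set L := ⨅ n, seq n with hLdef
  have hL0 : 0 ≤ L := le_ciInf fun n => (hmem n).1
  have hLlt : L < Real.pi := lt_of_le_of_lt (ciInf_le hbdd 0) (hmem 0).2
  rcases hL0.lt_or_eq with hLpos | hLzero
  · -- impossible: the limit would be a positive fixed point
    exfalso
    have hLmem : L ∈ Set.Ioo 0 Real.pi := ⟨hLpos, hLlt⟩
    -- continuity of g at L
    have hML : (0:ℝ) < 4*Real.sin (L/2)^2*(A^2*Real.cos (L/2)^2 + U2) := by
      have hs : 0 < Real.sin (L/2) :=
        Real.sin_pos_of_pos_of_lt_pi (by linarith) (by linarith [Real.pi_pos])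
      have hc : 0 < Real.cos (L/2) := by
        apply Real.cos_pos_of_mem_Ioo
        constructor <;> [linarith [Real.pi_pos]; linarith [Real.pi_pos]]
      positivity
    have hMLs : Real.sqrt (4*Real.sin (L/2)^2*(A^2*Real.cos (L/2)^2 + U2)) ≠ 0 :=
      ne_of_gt (Real.sqrt_pos.2 hML)
    have hNLs : Real.sqrt ((Real.cos (L/2)^2 - Real.sin (L/2)^2*D)^2
        + 4*Real.sin (L/2)^2*(A^2*Real.cos (L/2)^2 + U2)) ≠ 0 := by
      apply ne_of_gt
      apply Real.sqrt_pos.2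
      nlinarith only [hML, sq_nonneg (Real.cos (L/2)^2 - Real.sin (L/2)^2*D)]
    have hgc : ContinuousAt g L := by
      rw [hgdef]
      have hσc : Continuous fun b : ℝ => Real.cos (b/2)^2 - Real.sin (b/2)^2*D := by fun_prop
      have hMc : Continuous fun b : ℝ =>
          Real.sqrt (4*Real.sin (b/2)^2*(A^2*Real.cos (b/2)^2 + U2)) := by fun_prop
      have hNc : Continuous fun b : ℝ =>
          Real.sqrt ((Real.cos (b/2)^2 - Real.sin (b/2)^2*D)^2
            + 4*Real.sin (b/2)^2*(A^2*Real.cos (b/2)^2 + U2)) := by fun_prop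
      have hdivc : ContinuousAt (fun b : ℝ =>
          (Real.cos (b/2)^2 - Real.sin (b/2)^2*D) /
            Real.sqrt ((Real.cos (b/2)^2 - Real.sin (b/2)^2*D)^2
              + 4*Real.sin (b/2)^2*(A^2*Real.cos (b/2)^2 + U2))) L :=
        hσc.continuousAt.div hNc.continuousAt hNLs
      have hinvc : ContinuousAt (fun b : ℝ =>
          (Real.sqrt (4*Real.sin (b/2)^2*(A^2*Real.cos (b/2)^2 + U2)))⁻¹) L :=
        hMc.continuousAt.inv₀ hMLs
      have harcc : ContinuousAt (fun b : ℝ => Real.arccos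
          ((Real.cos (b/2)^2 - Real.sin (b/2)^2*D) /
            Real.sqrt ((Real.cos (b/2)^2 - Real.sin (b/2)^2*D)^2
              + 4*Real.sin (b/2)^2*(A^2*Real.cos (b/2)^2 + U2))) / 2) L :=
        (Real.continuous_arccos.continuousAt.comp hdivc).div_const 2
      apply ContinuousAt.mul continuousAt_const
      apply Real.continuous_arccos.continuousAt.comp
      apply ContinuousAt.abs
      apply ContinuousAt.add
      · exact ((Real.continuous_cos.comp (continuous_id.div_const 2)).continuousAt).mul
          (Real.continuous_cos.continuousAt.comp harcc)
      · exact ((Real.continuous_sin.comp (continuous_id.div_const 2)).continuousAt).mul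
          ((Real.continuous_sin.continuousAt.comp harcc).mul
            (hinvc.mul (by fun_prop)))
    -- betaQ agrees with g near L
    have hveq : g =ᶠ[nhds L] betaQ v P := by
      filter_upwards [Ioo_mem_nhds hLmem.1 hLmem.2] with b hb
      exact ((hkey b hb).1).symm
    have hbc : ContinuousAt (betaQ v P) L := hgc.congr hveq
    have h1 : Tendsto (fun n => seq (n+1)) atTop (nhds L) :=
      htend.comp (tendsto_add_atTop_nat 1)
    have h2 : Tendsto (fun n => betaQ v P (seq n)) atTop (nhds (betaQ v P L)) :=
      (hbc.tendsto).comp htend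
    have h3 : (fun n => seq (n+1)) = fun n => betaQ v P (seq n) := funext fun n => hseqS n
    rw [h3] at h1
    have hfix : betaQ v P L = L := tendsto_nhds_unique h2 h1
    have hlt := (hkey L hLmem).2
    linarith only [hfix, hlt]
  · rw [hLzero]
    exact htend
end
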